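/- Assume p ≥ 1 and that every arrival time satisfies 0 ≤ t_j ≤ μ₁·D̃. Let y be a greedy assignment and let y* be any assignment, with ℓ*_{i,j}(t) the load of machine i at time slot t under y* (using the true durations) after the first j jobs, and ℓ*_i(t) = ℓ*_{i,n}(t). Then for every job j: Σ_{t=1}^{T̃} [ (Σ_{i=1}^m ℓ̃_{i,j}(t)^p)^{q/p} − (Σ_{i=1}^m ℓ̃_{i,j−1}(t)^p)^{q/p} ] ≤ μ · Σ_{t=1}^{T̃} [ (Σ_{i=1}^m (ℓ̃_i(t) + ℓ*_{i,j}(t))^p)^{q/p} − (Σ_{i=1}^m (ℓ̃_i(t) + ℓ*_{i,j−1}(t))^p)^{q/p} ]. -/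

import Mathlib

open Finset


open Finset

/-- True load of machine `i` at integer time slot `s` after the first `j` jobs
(0-indexed: jobs with index `< j`), under assignment `y`, arrival times `t`,
true integer durations `d` and loads `P`. -/
noncomputable def trueLoad (m n : ℕ) (P : Fin m → Fin n → ℝ) (t d : Fin n → ℕ)
    (y : Fin n → Fin m) (j : ℕ) (i : Fin m) (s : ℕ) : ℝ :=
  ∑ k ∈ Finset.univ.filter
      (fun k : Fin n => (k : ℕ) < j ∧ y k = i ∧ t k + 1 ≤ s ∧ s ≤ t k + d k),
    P i k

/-- Pseudo-load of machine `i` at integer time slot `s` after the first `j`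
jobs, using the overestimated durations `⌊μ₁ · d̃ₖ⌋`. -/
noncomputable def pseudoLoad (m n : ℕ) (P : Fin m → Fin n → ℝ) (t : Fin n → ℕ)
    (dtil : Fin n → ℝ) (μ₁ : ℝ) (y : Fin n → Fin m) (j : ℕ) (i : Fin m) (s : ℕ) : ℝ :=
  ∑ k ∈ Finset.univ.filter
      (fun k : Fin n => (k : ℕ) < j ∧ y k = i ∧ t k + 1 ≤ s ∧ s ≤ t k + ⌊μ₁ * dtil k⌋₊),
    P i k

/-- The greedy condition: job `j` is assigned to a machine minimizing the total
increase, over the time slots `t_j+1, …, t_j+⌊μ₁·d̃_j⌋`, of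
`(Σ_z ℓ̃_z^p)^(q/p)` computed with the pseudo-loads of the first `j-1` jobs. -/
def IsGreedy (m n : ℕ) (P : Fin m → Fin n → ℝ) (t : Fin n → ℕ) (dtil : Fin n → ℝ)
    (μ₁ p q : ℝ) (y : Fin n → Fin m) : Prop :=
  ∀ (j : Fin n) (i' : Fin m),
    ∑ s ∈ Finset.Icc (t j + 1) (t j + ⌊μ₁ * dtil j⌋₊),
      ((∑ z, (pseudoLoad m n P t dtil μ₁ y j z s + if z = y j then P z j else 0) ^ p) ^ (q / p)
        - (∑ z, pseudoLoad m n P t dtil μ₁ y j z s ^ p) ^ (q / p))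
    ≤ ∑ s ∈ Finset.Icc (t j + 1) (t j + ⌊μ₁ * dtil j⌋₊),
      ((∑ z, (pseudoLoad m n P t dtil μ₁ y j z s + if z = i' then P z j else 0) ^ p) ^ (q / p)
        - (∑ z, pseudoLoad m n P t dtil μ₁ y j z s ^ p) ^ (q / p))


section helpers

lemma conv_two_point {f : ℝ → ℝ} (hf : ConvexOn ℝ (Set.Ici 0) f)
    {a b c : ℝ} (ha : 0 ≤ a) (hab : a ≤ b) (hc : 0 ≤ c) :
    f (a + c) - f a ≤ f (b + c) - f b := by
  rcases eq_or_lt_of_le (hab.trans (le_add_of_nonneg_right hc) : a ≤ b + c) with h | h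
  · have hb : b = a := le_antisymm (by linarith) hab
    have hc0 : c = 0 := by linarith
    simp [hb, hc0]
  · have hD0 : 0 < b - a + c := by linarith
    have hbc : (0:ℝ) ≤ b + c := by linarith
    have hla : (c / (b - a + c)) • a + ((b - a) / (b - a + c)) • (b + c) = b := by
      rw [smul_eq_mul, smul_eq_mul, div_mul_eq_mul_div, div_mul_eq_mul_div, ← add_div, div_eq_iff hD0.ne']
      ring
    have hlb : ((b - a) / (b - a + c)) • a + (c / (b - a + c)) • (b + c) = a + c := by
      rw [smul_eq_mul, smul_eq_mul, div_mul_eq_mul_div, div_mul_eq_mul_div, ← add_div, div_eq_iff hD0.ne']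
      ring
    have w1 : (0:ℝ) ≤ c / (b - a + c) := div_nonneg hc hD0.le
    have w2 : (0:ℝ) ≤ (b - a) / (b - a + c) := div_nonneg (by linarith) hD0.le
    have wsum : c / (b - a + c) + (b - a) / (b - a + c) = 1 := by field_simp; ring
    have h1 := hf.2 (Set.mem_Ici.2 ha) (Set.mem_Ici.2 hbc) w1 w2 wsum
    have h2 := hf.2 (Set.mem_Ici.2 ha) (Set.mem_Ici.2 hbc) w2 w1 (by linarith)
    rw [hla] at h1
    rw [hlb] at h2
    have : f b + f (a + c) ≤ f a + f (b + c) := by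
      calc f b + f (a+c) ≤ (c / (b-a+c)) * f a + ((b-a)/(b-a+c)) * f (b+c)
            + (((b-a)/(b-a+c)) * f a + (c/(b-a+c)) * f (b+c)) := by
            simp only [smul_eq_mul] at h1 h2; linarith
        _ = (c / (b-a+c) + (b-a)/(b-a+c)) * f a + ((b-a)/(b-a+c) + c/(b-a+c)) * f (b+c) := by ring
        _ = f a + f (b + c) := by
            have : c / (b-a+c) + (b-a)/(b-a+c) = 1 := wsum
            rw [this, (by linarith [this] : (b-a)/(b-a+c) + c/(b-a+c) = (1:ℝ))]; ring
    linarith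

lemma rpow_inc {r a b c : ℝ} (hr : 1 ≤ r) (ha : 0 ≤ a) (hab : a ≤ b) (hc : 0 ≤ c) :
    (a + c) ^ r - a ^ r ≤ (b + c) ^ r - b ^ r :=
  conv_two_point (convexOn_rpow hr) ha hab hc

lemma key_incr {p r A B u v c : ℝ} (hp : 1 ≤ p) (hr : 1 ≤ r)
    (hA : 0 ≤ A) (hAB : A ≤ B) (hu : 0 ≤ u) (huv : u ≤ v) (hc : 0 ≤ c) :
    ((u + c) ^ p + A) ^ r - (u ^ p + A) ^ r ≤ ((v + c) ^ p + B) ^ r - (v ^ p + B) ^ r := by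
  have hv : 0 ≤ v := hu.trans huv
  have hup : (0:ℝ) ≤ u ^ p := Real.rpow_nonneg hu p
  have hvp : (0:ℝ) ≤ v ^ p := Real.rpow_nonneg hv p
  have hδ : (u + c)^p - u^p ≤ (v + c)^p - v^p := rpow_inc hp hu huv hc
  have hδ0 : 0 ≤ (v+c)^p - v^p := by
    have := Real.rpow_le_rpow hv (le_add_of_nonneg_right hc) (by linarith : (0:ℝ) ≤ p)
    linarith
  have h1 : ((u + c)^p + A)^r ≤ (u^p + A + ((v+c)^p - v^p))^r := by
    apply Real.rpow_le_rpow _ (by linarith) (by linarith)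
    have : (0:ℝ) ≤ (u+c)^p := Real.rpow_nonneg (by linarith) p
    linarith
  have huvp : u^p ≤ v^p := Real.rpow_le_rpow hu huv (by linarith)
  have h2 : (u^p + A + ((v+c)^p - v^p))^r - (u^p + A)^r
      ≤ (v^p + B + ((v+c)^p - v^p))^r - (v^p + B)^r :=
    conv_two_point (convexOn_rpow hr) (by linarith) (by linarith) hδ0
  have e : v^p + B + ((v+c)^p - v^p) = (v+c)^p + B := by ring
  rw [e] at h2
  linarith

variable {m n : ℕ}

lemma F_incr {p r : ℝ} (hp : 1 ≤ p) (hr : 1 ≤ r)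
    {u v : Fin m → ℝ} (hu : ∀ z, 0 ≤ u z) (hv : ∀ z, 0 ≤ v z) (huv : ∀ z, u z ≤ v z)
    (i : Fin m) {c : ℝ} (hc : 0 ≤ c) :
    (∑ z, (u z + if z = i then c else 0) ^ p) ^ r - (∑ z, u z ^ p) ^ r
      ≤ (∑ z, (v z + if z = i then c else 0) ^ p) ^ r - (∑ z, v z ^ p) ^ r := by
  have hmem : i ∈ (univ : Finset (Fin m)) := mem_univ i
  have hrw : ∀ (w : Fin m → ℝ), ∑ z, (w z + if z = i then c else 0) ^ p
      = (w i + c) ^ p + ∑ z ∈ univ.erase i, w z ^ p := by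
    intro w
    rw [← Finset.add_sum_erase _ (fun z => (w z + if z = i then c else 0) ^ p) hmem]
    simp only [if_pos rfl]
    congr 1
    exact Finset.sum_congr rfl (fun z hz => by
      rw [if_neg (Finset.ne_of_mem_erase hz), add_zero])
  have hrw2 : ∀ (w : Fin m → ℝ), ∑ z, w z ^ p = w i ^ p + ∑ z ∈ univ.erase i, w z ^ p :=
    fun w => (Finset.add_sum_erase _ _ hmem).symm
  rw [hrw u, hrw v, hrw2 u, hrw2 v]
  exact key_incr hp hr (Finset.sum_nonneg fun z _ => Real.rpow_nonneg (hu z) p)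
    (Finset.sum_le_sum fun z _ => Real.rpow_le_rpow (hu z) (huv z) (by linarith))
    (hu i) (huv i) hc

lemma F_self_incr {p r : ℝ} (hp : 1 ≤ p) (hr : 1 ≤ r)
    {u w : Fin m → ℝ} (hu : ∀ z, 0 ≤ u z) (hw : ∀ z, 0 ≤ w z) :
    (0:ℝ) ≤ (∑ z, (u z + w z) ^ p) ^ r - (∑ z, u z ^ p) ^ r := by
  have h := Real.rpow_le_rpow (Finset.sum_nonneg fun z _ => Real.rpow_nonneg (hu z) p)
    (Finset.sum_le_sum fun z (_ : z ∈ univ) =>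
      Real.rpow_le_rpow (hu z) (le_add_of_nonneg_right (hw z)) (by linarith : (0:ℝ) ≤ p))
    (by linarith : (0:ℝ) ≤ r)
  linarith

lemma sum_filter_succ (j : Fin n) (Q : Fin n → Prop) [DecidablePred Q] (f : Fin n → ℝ) :
    ∑ k ∈ univ.filter (fun k : Fin n => (k : ℕ) < (j : ℕ) + 1 ∧ Q k), f k
      = (∑ k ∈ univ.filter (fun k : Fin n => (k : ℕ) < (j : ℕ) ∧ Q k), f k)
        + if Q j then f j else 0 := by
  rw [Finset.sum_filter, Finset.sum_filter]
  have key : ∀ k : Fin n, (if ((k : ℕ) < (j : ℕ) + 1 ∧ Q k) then f k else 0)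
      = (if ((k : ℕ) < (j : ℕ) ∧ Q k) then f k else 0)
        + (if k = j then (if Q k then f k else 0) else 0) := by
    intro k
    by_cases he : k = j
    · subst he
      by_cases hq : Q k <;> simp [hq]
    · have hne : (k : ℕ) ≠ (j : ℕ) := fun h => he (Fin.ext h)
      have hiff : ((k : ℕ) < (j : ℕ) + 1) ↔ ((k : ℕ) < (j : ℕ)) := by omega
      simp [he, hiff]
  rw [Finset.sum_congr rfl (fun k _ => key k), Finset.sum_add_distrib,
    Finset.sum_ite_eq' univ j]
  simp

lemma avg_block {a dj L : ℕ} (hdj : 1 ≤ dj) (hdL : dj ≤ L) {g : ℕ → ℝ}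
    (hg0 : ∀ s, 0 ≤ g s)
    (hanti : ∀ s s', a + 1 ≤ s → s ≤ s' → g s' ≤ g s) :
    (dj : ℝ) * ∑ s ∈ Finset.Icc (a+1) (a+L), g s
      ≤ (L : ℝ) * ∑ s ∈ Finset.Icc (a+1) (a+dj), g s := by
  have e1 : Finset.Icc (a+1) (a+L) = Finset.Ioc a (a+L) := by
    ext x; simp only [mem_Icc, mem_Ioc]; omega
  have e2 : Finset.Icc (a+1) (a+dj) = Finset.Ioc a (a+dj) := by
    ext x; simp only [mem_Icc, mem_Ioc]; omega
  rw [e1, e2]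
  have hsplit : ∑ s ∈ Ioc a (a+dj), g s + ∑ s ∈ Ioc (a+dj) (a+L), g s
      = ∑ s ∈ Ioc a (a+L), g s :=
    Finset.sum_Ioc_consecutive g (Nat.le_add_right a dj) (by omega)
  have hG0 : 0 ≤ g (a+dj) := hg0 _
  have hdjR : (dj:ℝ) ≤ (L:ℝ) := Nat.cast_le.2 hdL
  have hdj0 : (0:ℝ) ≤ (dj:ℝ) := Nat.cast_nonneg _
  have h2 : ∑ s ∈ Ioc (a+dj) (a+L), g s ≤ ((L : ℝ) - dj) * g (a+dj) := by
    have h := Finset.sum_le_card_nsmul (Ioc (a+dj) (a+L)) g (g (a+dj))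
      (fun x hx => by
        rw [mem_Ioc] at hx
        exact hanti (a+dj) x (by omega) hx.1.le)
    rw [Nat.card_Ioc, nsmul_eq_mul, Nat.cast_sub (by omega)] at h
    push_cast at h
    linarith
  have h3 : (dj : ℝ) * g (a+dj) ≤ ∑ s ∈ Ioc a (a+dj), g s := by
    have h := Finset.card_nsmul_le_sum (Ioc a (a+dj)) g (g (a+dj))
      (fun x hx => by
        rw [mem_Ioc] at hx
        exact hanti x (a+dj) hx.1 hx.2)
    rw [Nat.card_Ioc, nsmul_eq_mul, Nat.cast_sub (by omega)] at h
    push_cast at h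
    linarith
  calc (dj:ℝ) * ∑ s ∈ Ioc a (a+L), g s
      = (dj:ℝ) * ∑ s ∈ Ioc a (a+dj), g s + (dj:ℝ) * ∑ s ∈ Ioc (a+dj) (a+L), g s := by
        rw [← hsplit]; ring
    _ ≤ (dj:ℝ) * ∑ s ∈ Ioc a (a+dj), g s + (dj:ℝ) * (((L:ℝ) - dj) * g (a+dj)) := by
        have := mul_le_mul_of_nonneg_left h2 hdj0; linarith
    _ = (dj:ℝ) * ∑ s ∈ Ioc a (a+dj), g s + ((L:ℝ) - dj) * ((dj:ℝ) * g (a+dj)) := by ring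
    _ ≤ (dj:ℝ) * ∑ s ∈ Ioc a (a+dj), g s + ((L:ℝ) - dj) * ∑ s ∈ Ioc a (a+dj), g s := by
        have := mul_le_mul_of_nonneg_left h3 (by linarith : (0:ℝ) ≤ (L:ℝ) - dj); linarith
    _ = (L:ℝ) * ∑ s ∈ Ioc a (a+dj), g s := by ring
end helpers

section loads
variable {m n : ℕ} (P : Fin m → Fin n → ℝ) (t d : Fin n → ℕ) (dtil : Fin n → ℝ) (μ₁ : ℝ)
  (y : Fin n → Fin m)

lemma pseudoLoad_nonneg (hP : ∀ i j, 0 ≤ P i j) (j : ℕ) (i : Fin m) (s : ℕ) :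
    0 ≤ pseudoLoad m n P t dtil μ₁ y j i s :=
  Finset.sum_nonneg fun k _ => hP i k

lemma trueLoad_nonneg (hP : ∀ i j, 0 ≤ P i j) (j : ℕ) (i : Fin m) (s : ℕ) :
    0 ≤ trueLoad m n P t d y j i s :=
  Finset.sum_nonneg fun k _ => hP i k

lemma pseudoLoad_succ (j : Fin n) (i : Fin m) (s : ℕ) :
    pseudoLoad m n P t dtil μ₁ y ((j : ℕ) + 1) i s
      = pseudoLoad m n P t dtil μ₁ y (j : ℕ) i s
        + if (y j = i ∧ t j + 1 ≤ s ∧ s ≤ t j + ⌊μ₁ * dtil j⌋₊) then P i j else 0 := by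
  unfold pseudoLoad
  exact sum_filter_succ j _ _

lemma trueLoad_succ (j : Fin n) (i : Fin m) (s : ℕ) :
    trueLoad m n P t d y ((j : ℕ) + 1) i s
      = trueLoad m n P t d y (j : ℕ) i s
        + if (y j = i ∧ t j + 1 ≤ s ∧ s ≤ t j + d j) then P i j else 0 := by
  unfold trueLoad
  exact sum_filter_succ j _ _

lemma pseudoLoad_mono_j (hP : ∀ i j, 0 ≤ P i j) {j j' : ℕ} (h : j ≤ j') (i : Fin m) (s : ℕ) :
    pseudoLoad m n P t dtil μ₁ y j i s ≤ pseudoLoad m n P t dtil μ₁ y j' i s := by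
  apply Finset.sum_le_sum_of_subset_of_nonneg _ (fun k _ _ => hP i k)
  intro k hk
  simp only [mem_filter, mem_univ, true_and] at hk ⊢
  exact ⟨lt_of_lt_of_le hk.1 h, hk.2⟩

lemma pseudoLoad_anti (hmono : Monotone fun j => t j) (hP : ∀ i j, 0 ≤ P i j)
    (j : Fin n) {s s' : ℕ} (hs : t j + 1 ≤ s) (hss : s ≤ s') (i : Fin m) :
    pseudoLoad m n P t dtil μ₁ y (j : ℕ) i s' ≤ pseudoLoad m n P t dtil μ₁ y (j : ℕ) i s := by
  apply Finset.sum_le_sum_of_subset_of_nonneg _ (fun k _ _ => hP i k)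
  intro k hk
  simp only [mem_filter, mem_univ, true_and] at hk ⊢
  obtain ⟨h1, h2, h3, h4⟩ := hk
  have htk : t k ≤ t j := hmono (by exact Fin.le_def.2 (le_of_lt h1))
  exact ⟨h1, h2, by omega, by omega⟩

end loads

theorem stmt1 (m n : ℕ) (hm : 1 ≤ m)
    (p μ₁ μ₂ Dtil : ℝ) (hp : 1 ≤ p)
    (hμ₁ : 1 ≤ μ₁) (hμ₂ : 1 ≤ μ₂)
    (t d : Fin n → ℕ) (dtil : Fin n → ℝ) (P : Fin m → Fin n → ℝ)
    (hmono : Monotone fun j => t j)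
    (harr : ∀ j, (t j : ℝ) ≤ μ₁ * Dtil)
    (hdtil : ∀ j, 1 ≤ dtil j ∧ dtil j ≤ Dtil)
    (hd : ∀ j, ⌈dtil j / μ₂⌉₊ ≤ d j ∧ d j ≤ ⌊μ₁ * dtil j⌋₊)
    (hP : ∀ i j, 0 ≤ P i j)
    (y : Fin n → Fin m)
    (hy : IsGreedy m n P t dtil μ₁ p (p + Real.logb 2 (2 * μ₁ * Dtil)) y)
    (ystar : Fin n → Fin m) (j : Fin n) :
    ∑ s ∈ Finset.Icc 1 ⌊2 * μ₁ * Dtil⌋₊,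
      ((∑ i, pseudoLoad m n P t dtil μ₁ y (j + 1) i s ^ p)
          ^ ((p + Real.logb 2 (2 * μ₁ * Dtil)) / p)
        - (∑ i, pseudoLoad m n P t dtil μ₁ y j i s ^ p)
          ^ ((p + Real.logb 2 (2 * μ₁ * Dtil)) / p))
    ≤ μ₁ * μ₂ *
      ∑ s ∈ Finset.Icc 1 ⌊2 * μ₁ * Dtil⌋₊,
        ((∑ i, (pseudoLoad m n P t dtil μ₁ y n i s
              + trueLoad m n P t d ystar (j + 1) i s) ^ p)
            ^ ((p + Real.logb 2 (2 * μ₁ * Dtil)) / p)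
          - (∑ i, (pseudoLoad m n P t dtil μ₁ y n i s
              + trueLoad m n P t d ystar j i s) ^ p)
            ^ ((p + Real.logb 2 (2 * μ₁ * Dtil)) / p)) := by
  classical
  have hp0 : (0:ℝ) < p := by linarith
  have hD1 : (1:ℝ) ≤ Dtil := le_trans (hdtil j).1 (hdtil j).2
  have hT1 : (1:ℝ) ≤ 2 * μ₁ * Dtil := by nlinarith
  have hlog : 0 ≤ Real.logb 2 (2 * μ₁ * Dtil) := Real.logb_nonneg (by norm_num) hT1
  set r : ℝ := (p + Real.logb 2 (2 * μ₁ * Dtil)) / p with hrdef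
  have hr1 : 1 ≤ r := by
    rw [hrdef, le_div_iff₀ hp0]; linarith
  have hdj1 : 1 ≤ d j := by
    have h1 : 0 < dtil j / μ₂ := div_pos (by linarith [(hdtil j).1]) (by linarith)
    have h2 := Nat.ceil_pos.2 h1
    have h3 := (hd j).1
    omega
  have hdjL : d j ≤ ⌊μ₁ * dtil j⌋₊ := (hd j).2
  have hμdt : (0:ℝ) ≤ μ₁ * dtil j := by nlinarith [(hdtil j).1]
  have hLr : ((⌊μ₁ * dtil j⌋₊ : ℕ) : ℝ) ≤ μ₁ * dtil j := Nat.floor_le hμdt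
  have hLmu : ((⌊μ₁ * dtil j⌋₊ : ℕ) : ℝ) ≤ μ₁ * μ₂ * (d j : ℝ) := by
    have h1 : dtil j / μ₂ ≤ ((⌈dtil j / μ₂⌉₊ : ℕ) : ℝ) := Nat.le_ceil _
    have h2 : ((⌈dtil j / μ₂⌉₊ : ℕ) : ℝ) ≤ (d j : ℝ) := Nat.cast_le.2 (hd j).1
    have hμ₂0 : (0:ℝ) < μ₂ := by linarith
    have he : μ₁ * dtil j = μ₁ * μ₂ * (dtil j / μ₂) := by field_simp
    have hμμ : (0:ℝ) ≤ μ₁ * μ₂ := by nlinarith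
    calc ((⌊μ₁ * dtil j⌋₊ : ℕ) : ℝ) ≤ μ₁ * dtil j := hLr
      _ = μ₁ * μ₂ * (dtil j / μ₂) := he
      _ ≤ μ₁ * μ₂ * ((⌈dtil j / μ₂⌉₊ : ℕ) : ℝ) := mul_le_mul_of_nonneg_left h1 hμμ
      _ ≤ μ₁ * μ₂ * (d j : ℝ) := mul_le_mul_of_nonneg_left h2 hμμ
  have hTL : t j + ⌊μ₁ * dtil j⌋₊ ≤ ⌊2 * μ₁ * Dtil⌋₊ := by
    apply Nat.le_floor
    push_cast
    have h1 := harr j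
    have h2 : μ₁ * dtil j ≤ μ₁ * Dtil :=
      mul_le_mul_of_nonneg_left (hdtil j).2 (by linarith)
    nlinarith [hLr]
  have hsub : Finset.Icc (t j + 1) (t j + ⌊μ₁ * dtil j⌋₊) ⊆ Finset.Icc 1 ⌊2 * μ₁ * Dtil⌋₊ := by
    intro s hs; rw [mem_Icc] at hs ⊢; omega
  have hsubd : Finset.Icc (t j + 1) (t j + d j) ⊆ Finset.Icc 1 ⌊2 * μ₁ * Dtil⌋₊ := by
    intro s hs; rw [mem_Icc] at hs ⊢; omega
  -- Step A : restrict the LHS sum to the pseudo-interval of job j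
  have hzeroA : ∀ s ∈ Finset.Icc 1 ⌊2 * μ₁ * Dtil⌋₊,
      s ∉ Finset.Icc (t j + 1) (t j + ⌊μ₁ * dtil j⌋₊) →
      ((∑ i, pseudoLoad m n P t dtil μ₁ y ((j:ℕ) + 1) i s ^ p) ^ r
        - (∑ i, pseudoLoad m n P t dtil μ₁ y (j:ℕ) i s ^ p) ^ r) = 0 := by
    intro s _ hsI
    have hcond : ¬ (t j + 1 ≤ s ∧ s ≤ t j + ⌊μ₁ * dtil j⌋₊) := by
      rw [← mem_Icc]; exact hsI
    have hz : ∀ z, pseudoLoad m n P t dtil μ₁ y ((j:ℕ) + 1) z s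
        = pseudoLoad m n P t dtil μ₁ y (j:ℕ) z s := by
      intro z
      rw [pseudoLoad_succ, if_neg (fun hh => hcond hh.2), add_zero]
    simp only [hz, sub_self]
  have stepA : ∑ s ∈ Finset.Icc 1 ⌊2 * μ₁ * Dtil⌋₊,
      ((∑ i, pseudoLoad m n P t dtil μ₁ y ((j:ℕ) + 1) i s ^ p) ^ r
        - (∑ i, pseudoLoad m n P t dtil μ₁ y (j:ℕ) i s ^ p) ^ r)
      = ∑ s ∈ Finset.Icc (t j + 1) (t j + ⌊μ₁ * dtil j⌋₊),
          ((∑ z, (pseudoLoad m n P t dtil μ₁ y (j:ℕ) z s + if z = y j then P z j else 0) ^ p) ^ r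
            - (∑ z, pseudoLoad m n P t dtil μ₁ y (j:ℕ) z s ^ p) ^ r) := by
    rw [← Finset.sum_subset hsub hzeroA]
    apply Finset.sum_congr rfl
    intro s hs
    rw [mem_Icc] at hs
    have hz : ∀ z, pseudoLoad m n P t dtil μ₁ y ((j:ℕ) + 1) z s
        = pseudoLoad m n P t dtil μ₁ y (j:ℕ) z s + if z = y j then P z j else 0 := by
      intro z
      rw [pseudoLoad_succ]
      congr 1
      by_cases h : z = y j
      · simp [h, hs.1, hs.2]
      · simp [h, Ne.symm h]
    simp only [hz]
  -- Step B : greedy comparison with machine ystar j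
  have hgreedy := hy j (ystar j)
  rw [← hrdef] at hgreedy
  -- rewrite the ite payload to a constant
  have hG2eq : ∀ s, ((∑ z, (pseudoLoad m n P t dtil μ₁ y (j:ℕ) z s
        + if z = ystar j then P z j else 0) ^ p) ^ r
        - (∑ z, pseudoLoad m n P t dtil μ₁ y (j:ℕ) z s ^ p) ^ r)
      = ((∑ z, (pseudoLoad m n P t dtil μ₁ y (j:ℕ) z s
        + if z = ystar j then P (ystar j) j else 0) ^ p) ^ r
        - (∑ z, pseudoLoad m n P t dtil μ₁ y (j:ℕ) z s ^ p) ^ r) := by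
    intro s
    congr 2
    apply Finset.sum_congr rfl
    intro z _
    by_cases h : z = ystar j <;> simp [h]
  have hG2nonneg : ∀ s, 0 ≤ ((∑ z, (pseudoLoad m n P t dtil μ₁ y (j:ℕ) z s
        + if z = ystar j then P (ystar j) j else 0) ^ p) ^ r
        - (∑ z, pseudoLoad m n P t dtil μ₁ y (j:ℕ) z s ^ p) ^ r) := by
    intro s
    exact F_self_incr hp hr1 (fun z => pseudoLoad_nonneg P t dtil μ₁ y hP _ z s)
      (fun z => by by_cases h : z = ystar j <;> simp [h, hP])
  have hG2anti : ∀ s s', t j + 1 ≤ s → s ≤ s' →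
      ((∑ z, (pseudoLoad m n P t dtil μ₁ y (j:ℕ) z s'
        + if z = ystar j then P (ystar j) j else 0) ^ p) ^ r
        - (∑ z, pseudoLoad m n P t dtil μ₁ y (j:ℕ) z s' ^ p) ^ r)
      ≤ ((∑ z, (pseudoLoad m n P t dtil μ₁ y (j:ℕ) z s
        + if z = ystar j then P (ystar j) j else 0) ^ p) ^ r
        - (∑ z, pseudoLoad m n P t dtil μ₁ y (j:ℕ) z s ^ p) ^ r) := by
    intro s s' hs hss
    exact F_incr hp hr1 (fun z => pseudoLoad_nonneg P t dtil μ₁ y hP _ z s')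
      (fun z => pseudoLoad_nonneg P t dtil μ₁ y hP _ z s)
      (fun z => pseudoLoad_anti P t dtil μ₁ y hmono hP j hs hss z)
      (ystar j) (hP _ _)
  -- Step C : averaging over the shorter (true-duration) interval
  have stepC := avg_block (a := t j) hdj1 hdjL
      (g := fun s => ((∑ z, (pseudoLoad m n P t dtil μ₁ y (j:ℕ) z s
        + if z = ystar j then P (ystar j) j else 0) ^ p) ^ r
        - (∑ z, pseudoLoad m n P t dtil μ₁ y (j:ℕ) z s ^ p) ^ r))
      (fun s => hG2nonneg s) (fun s s' hs hss => hG2anti s s' hs hss)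
  -- Step D : per-slot comparison with the offline-augmented loads
  have stepD : ∀ s ∈ Finset.Icc (t j + 1) (t j + d j),
      ((∑ z, (pseudoLoad m n P t dtil μ₁ y (j:ℕ) z s
        + if z = ystar j then P (ystar j) j else 0) ^ p) ^ r
        - (∑ z, pseudoLoad m n P t dtil μ₁ y (j:ℕ) z s ^ p) ^ r)
      ≤ ((∑ i, (pseudoLoad m n P t dtil μ₁ y n i s
            + trueLoad m n P t d ystar ((j:ℕ) + 1) i s) ^ p) ^ r
        - (∑ i, (pseudoLoad m n P t dtil μ₁ y n i s
            + trueLoad m n P t d ystar (j:ℕ) i s) ^ p) ^ r) := by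
    intro s hs
    rw [mem_Icc] at hs
    have hi : ∀ i, pseudoLoad m n P t dtil μ₁ y n i s
        + trueLoad m n P t d ystar ((j:ℕ) + 1) i s
        = (pseudoLoad m n P t dtil μ₁ y n i s + trueLoad m n P t d ystar (j:ℕ) i s)
          + (if i = ystar j then P (ystar j) j else 0) := by
      intro i
      rw [trueLoad_succ]
      by_cases h : i = ystar j
      · simp [h, hs.1, hs.2, add_assoc]
      · simp [h, Ne.symm h]
    simp only [hi]
    exact F_incr hp hr1 (fun z => pseudoLoad_nonneg P t dtil μ₁ y hP _ z s)
      (fun z => add_nonneg (pseudoLoad_nonneg P t dtil μ₁ y hP _ z s)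
        (trueLoad_nonneg P t d ystar hP _ z s))
      (fun z => le_add_of_le_of_nonneg
        (pseudoLoad_mono_j P t dtil μ₁ y hP (le_of_lt j.isLt) z s)
        (trueLoad_nonneg P t d ystar hP _ z s))
      (ystar j) (hP _ _)
  -- Step E : the RHS sum restricts to the true interval of job j
  have hzeroE : ∀ s ∈ Finset.Icc 1 ⌊2 * μ₁ * Dtil⌋₊,
      s ∉ Finset.Icc (t j + 1) (t j + d j) →
      ((∑ i, (pseudoLoad m n P t dtil μ₁ y n i s
            + trueLoad m n P t d ystar ((j:ℕ) + 1) i s) ^ p) ^ r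
        - (∑ i, (pseudoLoad m n P t dtil μ₁ y n i s
            + trueLoad m n P t d ystar (j:ℕ) i s) ^ p) ^ r) = 0 := by
    intro s _ hsI
    have hcond : ¬ (t j + 1 ≤ s ∧ s ≤ t j + d j) := by
      rw [← mem_Icc]; exact hsI
    have hz : ∀ z, trueLoad m n P t d ystar ((j:ℕ) + 1) z s
        = trueLoad m n P t d ystar (j:ℕ) z s := by
      intro z
      rw [trueLoad_succ, if_neg (fun hh => hcond hh.2), add_zero]
    simp only [hz, sub_self]
  have stepE : ∑ s ∈ Finset.Icc 1 ⌊2 * μ₁ * Dtil⌋₊,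
      ((∑ i, (pseudoLoad m n P t dtil μ₁ y n i s
            + trueLoad m n P t d ystar ((j:ℕ) + 1) i s) ^ p) ^ r
        - (∑ i, (pseudoLoad m n P t dtil μ₁ y n i s
            + trueLoad m n P t d ystar (j:ℕ) i s) ^ p) ^ r)
      = ∑ s ∈ Finset.Icc (t j + 1) (t j + d j),
        ((∑ i, (pseudoLoad m n P t dtil μ₁ y n i s
            + trueLoad m n P t d ystar ((j:ℕ) + 1) i s) ^ p) ^ r
        - (∑ i, (pseudoLoad m n P t dtil μ₁ y n i s
            + trueLoad m n P t d ystar (j:ℕ) i s) ^ p) ^ r) :=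
    (Finset.sum_subset hsubd hzeroE).symm
  -- Assemble everything
  rw [stepA, stepE]
  have hCB : ∑ s ∈ Finset.Icc (t j + 1) (t j + d j),
      ((∑ z, (pseudoLoad m n P t dtil μ₁ y (j:ℕ) z s
        + if z = ystar j then P (ystar j) j else 0) ^ p) ^ r
        - (∑ z, pseudoLoad m n P t dtil μ₁ y (j:ℕ) z s ^ p) ^ r)
      ≤ ∑ s ∈ Finset.Icc (t j + 1) (t j + d j),
      ((∑ i, (pseudoLoad m n P t dtil μ₁ y n i s
            + trueLoad m n P t d ystar ((j:ℕ) + 1) i s) ^ p) ^ r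
        - (∑ i, (pseudoLoad m n P t dtil μ₁ y n i s
            + trueLoad m n P t d ystar (j:ℕ) i s) ^ p) ^ r) :=
    Finset.sum_le_sum stepD
  have hC0 : 0 ≤ ∑ s ∈ Finset.Icc (t j + 1) (t j + d j),
      ((∑ z, (pseudoLoad m n P t dtil μ₁ y (j:ℕ) z s
        + if z = ystar j then P (ystar j) j else 0) ^ p) ^ r
        - (∑ z, pseudoLoad m n P t dtil μ₁ y (j:ℕ) z s ^ p) ^ r) :=
    Finset.sum_nonneg fun s _ => hG2nonneg s
  have hXA : ∑ s ∈ Finset.Icc (t j + 1) (t j + ⌊μ₁ * dtil j⌋₊),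
      ((∑ z, (pseudoLoad m n P t dtil μ₁ y (j:ℕ) z s + if z = y j then P z j else 0) ^ p) ^ r
        - (∑ z, pseudoLoad m n P t dtil μ₁ y (j:ℕ) z s ^ p) ^ r)
      ≤ ∑ s ∈ Finset.Icc (t j + 1) (t j + ⌊μ₁ * dtil j⌋₊),
      ((∑ z, (pseudoLoad m n P t dtil μ₁ y (j:ℕ) z s
        + if z = ystar j then P (ystar j) j else 0) ^ p) ^ r
        - (∑ z, pseudoLoad m n P t dtil μ₁ y (j:ℕ) z s ^ p) ^ r) := by
    calc _ ≤ _ := hgreedy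
    _ = _ := Finset.sum_congr rfl fun s _ => hG2eq s
  have hdjpos : (0:ℝ) < (d j : ℝ) := by exact_mod_cast hdj1
  apply le_of_mul_le_mul_left _ hdjpos
  calc (d j : ℝ) * ∑ s ∈ Finset.Icc (t j + 1) (t j + ⌊μ₁ * dtil j⌋₊),
      ((∑ z, (pseudoLoad m n P t dtil μ₁ y (j:ℕ) z s + if z = y j then P z j else 0) ^ p) ^ r
        - (∑ z, pseudoLoad m n P t dtil μ₁ y (j:ℕ) z s ^ p) ^ r)
      ≤ (d j : ℝ) * ∑ s ∈ Finset.Icc (t j + 1) (t j + ⌊μ₁ * dtil j⌋₊),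
      ((∑ z, (pseudoLoad m n P t dtil μ₁ y (j:ℕ) z s
        + if z = ystar j then P (ystar j) j else 0) ^ p) ^ r
        - (∑ z, pseudoLoad m n P t dtil μ₁ y (j:ℕ) z s ^ p) ^ r) :=
      mul_le_mul_of_nonneg_left hXA hdjpos.le
    _ ≤ ((⌊μ₁ * dtil j⌋₊ : ℕ) : ℝ) * ∑ s ∈ Finset.Icc (t j + 1) (t j + d j),
      ((∑ z, (pseudoLoad m n P t dtil μ₁ y (j:ℕ) z s
        + if z = ystar j then P (ystar j) j else 0) ^ p) ^ r
        - (∑ z, pseudoLoad m n P t dtil μ₁ y (j:ℕ) z s ^ p) ^ r) := stepC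
    _ ≤ (μ₁ * μ₂ * (d j : ℝ)) * ∑ s ∈ Finset.Icc (t j + 1) (t j + d j),
      ((∑ z, (pseudoLoad m n P t dtil μ₁ y (j:ℕ) z s
        + if z = ystar j then P (ystar j) j else 0) ^ p) ^ r
        - (∑ z, pseudoLoad m n P t dtil μ₁ y (j:ℕ) z s ^ p) ^ r) :=
      mul_le_mul_of_nonneg_right hLmu hC0
    _ ≤ (μ₁ * μ₂ * (d j : ℝ)) * ∑ s ∈ Finset.Icc (t j + 1) (t j + d j),
      ((∑ i, (pseudoLoad m n P t dtil μ₁ y n i s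
            + trueLoad m n P t d ystar ((j:ℕ) + 1) i s) ^ p) ^ r
        - (∑ i, (pseudoLoad m n P t dtil μ₁ y n i s
            + trueLoad m n P t d ystar (j:ℕ) i s) ^ p) ^ r) :=
      mul_le_mul_of_nonneg_left hCB (by positivity)
    _ = (d j : ℝ) * (μ₁ * μ₂ * ∑ s ∈ Finset.Icc (t j + 1) (t j + d j),
      ((∑ i, (pseudoLoad m n P t dtil μ₁ y n i s
            + trueLoad m n P t d ystar ((j:ℕ) + 1) i s) ^ p) ^ r
        - (∑ i, (pseudoLoad m n P t dtil μ₁ y n i s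
            + trueLoad m n P t d ystar (j:ℕ) i s) ^ p) ^ r)) := by ring
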